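/- Let V be a real vector space and Z ⊆ V a convex subset. Let D : Z × Z → [0,1] be a metric-like loss with constant C ≥ 1 such that for every z ∈ Z the map w ↦ D(w, z) is convex on Z. Let X be a set, F a nonempty finite set of functions X → Z, f* ∈ F, and let T ≥ 1, N ≥ 1 be integers, β ≥ 0 a real, and γ ≥ 1 a real. Let x^(1),…,x^(T) ∈ X and let f̂^(1),…,f̂^(T) : X → Z satisfy the offline estimation guarantee with parameter β relative to f*: for every t ∈ {1,…,T}, ∑_{s=1}^{t−1} D(f̂^(t)(x^(s)), f*(x^(s))) ≤ β; extend the sequence by f̂^(T+s) := f̂^(T) for 1 ≤ s ≤ N. Define f̃^(t) := (1/N) ∑_{i=t+1}^{t+N} f̂^(i) (pointwise average in Z), and define losses ℓ^(t)(f) := D(f̃^(t)(x^(t)), f(x^(t))) for f : X → Z. Let μ^(1),…,μ^(T) be finitely supported probability distributions over functions X → Z, and set R := ∑_{t=1}^{T} E_{f ∼ μ^(t)}[ℓ^(t)(f)] − γ · min_{f ∈ F} ∑_{t=1}^{T} ℓ^(t)(f). Then ∑_{t=1}^{T} E_{f ∼ μ^(t)}[ D(f(x^(t)), f*(x^(t)))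 ] ≤ C(γ+1)·(N + βT/N) + C·R. -/

import Mathlib

/-- Reduction from oracle-efficient online estimation to delayed online
learning.  `Z` is a convex subset of a real vector space, `D` is a metric-like loss with
constant `C` on `Z`, convex in its first argument; the offline estimators `f̂^(t)` satisfy the
offline guarantee with parameter `β` and are extended by `f̂^(T+s) = f̂^(T)`; the averaged
estimators are `f̃^(t) = (1/N) ∑_{i=t+1}^{t+N} f̂^(i)` and the constructed losses are
`ℓ^(t)(f) = D(f̃^(t)(x^(t)), f(x^(t)))`.  If `R` is the `γ`-regret of the finitely supported
prediction distributions `μ^(t)` (given by supports `S t` and weights `w t`) on these losses,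
then the online estimation error is at most `C(γ+1)(N + βT/N) + C·R`. -/
theorem delayed_online_learning_reduction {V : Type*} [AddCommGroup V] [Module ℝ V]
    (Z : Set V) (hZconv : Convex ℝ Z)
    (D : V → V → ℝ) (C : ℝ) (hC : 1 ≤ C)
    (hD0 : ∀ z₁ ∈ Z, ∀ z₂ ∈ Z, 0 ≤ D z₁ z₂)
    (hD1 : ∀ z₁ ∈ Z, ∀ z₂ ∈ Z, D z₁ z₂ ≤ 1)
    (hDsymm : ∀ z₁ ∈ Z, ∀ z₂ ∈ Z, D z₁ z₂ = D z₂ z₁)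
    (hDdiag : ∀ z ∈ Z, D z z = 0)
    (hDtri : ∀ z₁ ∈ Z, ∀ z₂ ∈ Z, ∀ z₃ ∈ Z, D z₁ z₂ ≤ C * (D z₁ z₃ + D z₃ z₂))
    (hDconv : ∀ z ∈ Z, ConvexOn ℝ Z (fun w => D w z))
    {X : Type*} (F : Finset (X → V)) (hF : F.Nonempty)
    (hFZ : ∀ f ∈ F, ∀ xx, f xx ∈ Z)
    (fstar : X → V) (hfstar : fstar ∈ F)
    (T N : ℕ) (hT : 1 ≤ T) (hN : 1 ≤ N)
    (β : ℝ) (hβ : 0 ≤ β) (γ : ℝ) (hγ : 1 ≤ γ)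
    (x : ℕ → X) (fhat : ℕ → X → V)
    (hhatZ : ∀ t xx, fhat t xx ∈ Z)
    (hoff : ∀ t ∈ Finset.Icc 1 T,
      ∑ s ∈ Finset.Icc 1 (t - 1), D (fhat t (x s)) (fstar (x s)) ≤ β)
    (hext : ∀ s ∈ Finset.Icc 1 N, fhat (T + s) = fhat T)
    (ftil : ℕ → X → V)
    (hftil : ∀ t xx, ftil t xx = (N : ℝ)⁻¹ • ∑ i ∈ Finset.Icc (t + 1) (t + N), fhat i xx)
    (S : ℕ → Finset (X → V)) (w : ℕ → (X → V) → ℝ)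
    (hw0 : ∀ t ∈ Finset.Icc 1 T, ∀ g, 0 ≤ w t g)
    (hw1 : ∀ t ∈ Finset.Icc 1 T, ∑ g ∈ S t, w t g = 1)
    (hSZ : ∀ t ∈ Finset.Icc 1 T, ∀ g ∈ S t, ∀ xx, g xx ∈ Z)
    (R : ℝ)
    (hR : R = ∑ t ∈ Finset.Icc 1 T, ∑ g ∈ S t, w t g * D (ftil t (x t)) (g (x t))
      - γ * F.inf' hF (fun f => ∑ t ∈ Finset.Icc 1 T, D (ftil t (x t)) (f (x t)))) :
    ∑ t ∈ Finset.Icc 1 T, ∑ g ∈ S t, w t g * D (g (x t)) (fstar (x t))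
      ≤ C * (γ + 1) * ((N : ℝ) + β * T / N) + C * R := by
  classical
  have hNpos : (0:ℝ) < (N:ℝ) := by exact_mod_cast hN
  have hfstarZ : ∀ xx, fstar xx ∈ Z := hFZ fstar hfstar
  -- membership of averaged estimators
  have htilZ : ∀ t xx, ftil t xx ∈ Z := by
    intro t xx
    rw [hftil, Finset.smul_sum]
    refine hZconv.sum_mem (fun i _ => by positivity) ?_ (fun i _ => hhatZ i xx)
    rw [Finset.sum_const, Nat.card_Icc]
    have : t + N + 1 - (t + 1) = N := by omega
    rw [this, nsmul_eq_mul, mul_inv_cancel₀ (ne_of_gt hNpos)]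
  -- Jensen per round
  have hJensen : ∀ t, D (ftil t (x t)) (fstar (x t))
      ≤ (N:ℝ)⁻¹ * ∑ i ∈ Finset.Icc (t+1) (t+N), D (fhat i (x t)) (fstar (x t)) := by
    intro t
    have h := (hDconv (fstar (x t)) (hfstarZ (x t))).map_sum_le
      (t := Finset.Icc (t+1) (t+N)) (w := fun _ => (N:ℝ)⁻¹)
      (p := fun i => fhat i (x t)) (fun i _ => by positivity)
      (by
        rw [Finset.sum_const, Nat.card_Icc]
        have : t + N + 1 - (t + 1) = N := by omega
        rw [this, nsmul_eq_mul, mul_inv_cancel₀ (ne_of_gt hNpos)])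
      (fun i _ => hhatZ i (x t))
    calc D (ftil t (x t)) (fstar (x t))
        = D (∑ i ∈ Finset.Icc (t+1) (t+N), (N:ℝ)⁻¹ • fhat i (x t)) (fstar (x t)) := by
          rw [hftil, Finset.smul_sum]
      _ ≤ ∑ i ∈ Finset.Icc (t+1) (t+N), (N:ℝ)⁻¹ • D (fhat i (x t)) (fstar (x t)) := h
      _ = (N:ℝ)⁻¹ * ∑ i ∈ Finset.Icc (t+1) (t+N), D (fhat i (x t)) (fstar (x t)) := by
          rw [Finset.mul_sum]; simp [smul_eq_mul]
  set A : ℝ := ∑ t ∈ Finset.Icc 1 T, D (ftil t (x t)) (fstar (x t)) with hA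
  -- bound A
  have hAbound : A ≤ (N:ℝ) + β * T / N := by
    set B : ℝ := ∑ t ∈ Finset.Icc 1 T, ∑ i ∈ Finset.Icc (t+1) (t+N),
        D (fhat i (x t)) (fstar (x t)) with hB
    have hAB : A ≤ (N:ℝ)⁻¹ * B := by
      rw [hA, hB, Finset.mul_sum]
      exact Finset.sum_le_sum fun t _ => hJensen t
    -- swap the order of summation
    have hswap : B = ∑ i ∈ Finset.Icc 1 (T+N),
        ∑ t ∈ (Finset.Icc 1 T).filter (fun t => t + 1 ≤ i ∧ i ≤ t + N),
          D (fhat i (x t)) (fstar (x t)) := by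
      rw [hB]
      refine Finset.sum_comm' ?_
      intro t i
      simp only [Finset.mem_Icc, Finset.mem_filter]
      omega
    -- bound inner sums
    have hinner1 : ∀ i ∈ Finset.Icc 1 T,
        (∑ t ∈ (Finset.Icc 1 T).filter (fun t => t + 1 ≤ i ∧ i ≤ t + N),
          D (fhat i (x t)) (fstar (x t))) ≤ β := by
      intro i hi
      rw [Finset.mem_Icc] at hi
      refine le_trans (Finset.sum_le_sum_of_subset_of_nonneg ?_
        (fun s hs _ => hD0 _ (hhatZ i (x s)) _ (hfstarZ (x s)))) (hoff i (by simp [Finset.mem_Icc]; omega))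
      intro s hs
      simp only [Finset.mem_Icc, Finset.mem_filter] at hs ⊢
      omega
    have hinner2 : ∀ i ∈ Finset.Icc (T+1) (T+N),
        (∑ t ∈ (Finset.Icc 1 T).filter (fun t => t + 1 ≤ i ∧ i ≤ t + N),
          D (fhat i (x t)) (fstar (x t))) ≤ (N:ℝ) := by
      intro i hi
      rw [Finset.mem_Icc] at hi
      have hcard : ((Finset.Icc 1 T).filter (fun t => t + 1 ≤ i ∧ i ≤ t + N)).card ≤ N := by
        have hsub : (Finset.Icc 1 T).filter (fun t => t + 1 ≤ i ∧ i ≤ t + N)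
            ⊆ Finset.Icc (i - N) (i - 1) := by
          intro s hs
          simp only [Finset.mem_Icc, Finset.mem_filter] at hs ⊢
          omega
        calc ((Finset.Icc 1 T).filter (fun t => t + 1 ≤ i ∧ i ≤ t + N)).card
            ≤ (Finset.Icc (i - N) (i - 1)).card := Finset.card_le_card hsub
          _ = i - 1 + 1 - (i - N) := Nat.card_Icc _ _
          _ ≤ N := by omega
      calc (∑ t ∈ (Finset.Icc 1 T).filter (fun t => t + 1 ≤ i ∧ i ≤ t + N),
            D (fhat i (x t)) (fstar (x t)))
          ≤ ∑ t ∈ (Finset.Icc 1 T).filter (fun t => t + 1 ≤ i ∧ i ≤ t + N), (1:ℝ) :=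
            Finset.sum_le_sum fun s _ => hD1 _ (hhatZ i (x s)) _ (hfstarZ (x s))
        _ = ((Finset.Icc 1 T).filter (fun t => t + 1 ≤ i ∧ i ≤ t + N)).card := by
            rw [Finset.sum_const]; simp
        _ ≤ (N:ℝ) := by exact_mod_cast hcard
    have hBbound : B ≤ (T:ℝ) * β + (N:ℝ) * (N:ℝ) := by
      rw [hswap]
      have hsplit : Finset.Icc 1 (T+N) = Finset.Icc 1 T ∪ Finset.Icc (T+1) (T+N) := by
        rw [Finset.Icc_add_one_left_eq_Ioc,
          (show Finset.Icc 1 (T + N) = Finset.Ioc 0 (T + N) from Finset.Icc_add_one_left_eq_Ioc (a := 0) (b := T + N)),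
          (show Finset.Icc 1 T = Finset.Ioc 0 T from Finset.Icc_add_one_left_eq_Ioc (a := 0) (b := T)),
          Finset.Ioc_union_Ioc_eq_Ioc (Nat.zero_le T) (Nat.le_add_right T N)]
      have hdisj : Disjoint (Finset.Icc 1 T) (Finset.Icc (T+1) (T+N)) := by
        rw [Finset.disjoint_left]
        intro a ha hb
        simp only [Finset.mem_Icc] at ha hb
        omega
      rw [hsplit, Finset.sum_union hdisj]
      have h1 : (∑ i ∈ Finset.Icc 1 T,
          ∑ t ∈ (Finset.Icc 1 T).filter (fun t => t + 1 ≤ i ∧ i ≤ t + N),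
            D (fhat i (x t)) (fstar (x t))) ≤ (T:ℝ) * β := by
        calc _ ≤ ∑ _i ∈ Finset.Icc 1 T, β := Finset.sum_le_sum hinner1
          _ = (T:ℝ) * β := by rw [Finset.sum_const, Nat.card_Icc]; simp [nsmul_eq_mul]
      have h2 : (∑ i ∈ Finset.Icc (T+1) (T+N),
          ∑ t ∈ (Finset.Icc 1 T).filter (fun t => t + 1 ≤ i ∧ i ≤ t + N),
            D (fhat i (x t)) (fstar (x t))) ≤ (N:ℝ) * (N:ℝ) := by
        calc _ ≤ ∑ _i ∈ Finset.Icc (T+1) (T+N), (N:ℝ) := Finset.sum_le_sum hinner2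
          _ = (N:ℝ) * (N:ℝ) := by
            rw [Finset.sum_const, Nat.card_Icc]
            have : T + N + 1 - (T + 1) = N := by omega
            rw [this, nsmul_eq_mul]
      linarith
    calc A ≤ (N:ℝ)⁻¹ * B := hAB
      _ ≤ (N:ℝ)⁻¹ * ((T:ℝ) * β + (N:ℝ) * (N:ℝ)) := by
          apply mul_le_mul_of_nonneg_left hBbound (by positivity)
      _ = (N:ℝ) + β * T / N := by field_simp; ring
  -- the regret identity and step 1
  have hinf : F.inf' hF (fun f => ∑ t ∈ Finset.Icc 1 T, D (ftil t (x t)) (f (x t))) ≤ A :=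
    Finset.inf'_le _ hfstar
  have hS1 : ∑ t ∈ Finset.Icc 1 T, ∑ g ∈ S t, w t g * D (ftil t (x t)) (g (x t))
      ≤ R + γ * A := by
    rw [hR]
    have := mul_le_mul_of_nonneg_left hinf (by linarith : (0:ℝ) ≤ γ)
    linarith
  -- triangle-inequality step
  have hstep1 : ∑ t ∈ Finset.Icc 1 T, ∑ g ∈ S t, w t g * D (g (x t)) (fstar (x t))
      ≤ C * (∑ t ∈ Finset.Icc 1 T, ∑ g ∈ S t, w t g * D (ftil t (x t)) (g (x t))) + C * A := by
    have key : ∀ t ∈ Finset.Icc 1 T,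
        (∑ g ∈ S t, w t g * D (g (x t)) (fstar (x t)))
          ≤ C * (∑ g ∈ S t, w t g * D (ftil t (x t)) (g (x t)))
            + C * D (ftil t (x t)) (fstar (x t)) := by
      intro t ht
      have hgle : ∀ g ∈ S t, w t g * D (g (x t)) (fstar (x t))
          ≤ C * (w t g * D (ftil t (x t)) (g (x t)))
            + C * D (ftil t (x t)) (fstar (x t)) * w t g := by
        intro g hg
        have hgZ := hSZ t ht g hg (x t)
        have htri := hDtri (g (x t)) hgZ (fstar (x t)) (hfstarZ (x t)) (ftil t (x t)) (htilZ t (x t))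
        rw [hDsymm (g (x t)) hgZ (ftil t (x t)) (htilZ t (x t))] at htri
        have hw := hw0 t ht g
        nlinarith [htri, hw]
      calc (∑ g ∈ S t, w t g * D (g (x t)) (fstar (x t)))
          ≤ ∑ g ∈ S t, (C * (w t g * D (ftil t (x t)) (g (x t)))
              + C * D (ftil t (x t)) (fstar (x t)) * w t g) := Finset.sum_le_sum hgle
        _ = C * (∑ g ∈ S t, w t g * D (ftil t (x t)) (g (x t)))
              + C * D (ftil t (x t)) (fstar (x t)) := by
            rw [Finset.sum_add_distrib, ← Finset.mul_sum, ← Finset.mul_sum, hw1 t ht, mul_one]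
    calc ∑ t ∈ Finset.Icc 1 T, ∑ g ∈ S t, w t g * D (g (x t)) (fstar (x t))
        ≤ ∑ t ∈ Finset.Icc 1 T, (C * (∑ g ∈ S t, w t g * D (ftil t (x t)) (g (x t)))
            + C * D (ftil t (x t)) (fstar (x t))) := Finset.sum_le_sum key
      _ = C * (∑ t ∈ Finset.Icc 1 T, ∑ g ∈ S t, w t g * D (ftil t (x t)) (g (x t))) + C * A := by
          rw [Finset.sum_add_distrib, ← Finset.mul_sum, ← Finset.mul_sum]
  have hCpos : (0:ℝ) < C := by linarith
  have hfin : C * (γ + 1) * A ≤ C * (γ + 1) * ((N:ℝ) + β * T / N) := by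
    apply mul_le_mul_of_nonneg_left hAbound (by nlinarith)
  calc ∑ t ∈ Finset.Icc 1 T, ∑ g ∈ S t, w t g * D (g (x t)) (fstar (x t))
      ≤ C * (∑ t ∈ Finset.Icc 1 T, ∑ g ∈ S t, w t g * D (ftil t (x t)) (g (x t))) + C * A := hstep1
    _ ≤ C * (R + γ * A) + C * A := by
        have := mul_le_mul_of_nonneg_left hS1 (le_of_lt hCpos)
        linarith
    _ = C * (γ + 1) * A + C * R := by ring
    _ ≤ C * (γ + 1) * ((N:ℝ) + β * T / N) + C * R := by linarith
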